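/- Let 𝓗 and 𝓗' be complex Hilbert spaces, let T : 𝓗 →ₗ.[ℂ] 𝓗 be a densely defined self-adjoint operator (T.adjoint = T), and let e : 𝓗 ≃ₗᵢ[ℂ] 𝓗' be a unitary isomorphism (linear isometric equivalence). Then the conjugated operator T' on 𝓗' — with domain e '' (dom T) and defined by T'(e x) = e(T x) for x ∈ dom T — is densely defined and self-adjoint: T'.adjoint = T'. -/

import Mathlib

/-- Transport of a densely defined self-adjoint operator by a unitary isomorphism:
if `T` is a densely defined self-adjoint operator on the complex Hilbert space `𝓗` and
`e : 𝓗 ≃ₗᵢ[ℂ] 𝓗'` is a unitary isomorphism, then the conjugated operator `T'` on `𝓗'`,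
with domain `e '' (dom T)` and `T' (e x) = e (T x)`, is densely defined and self-adjoint. -/
theorem stmt_9 {𝓗 𝓗' : Type*}
    [NormedAddCommGroup 𝓗] [InnerProductSpace ℂ 𝓗] [CompleteSpace 𝓗]
    [NormedAddCommGroup 𝓗'] [InnerProductSpace ℂ 𝓗'] [CompleteSpace 𝓗']
    (T : 𝓗 →ₗ.[ℂ] 𝓗) (hdense : Dense (T.domain : Set 𝓗))
    (hsa : T.adjoint = T) (e : 𝓗 ≃ₗᵢ[ℂ] 𝓗') :
    ∃ T' : 𝓗' →ₗ.[ℂ] 𝓗',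
      (T'.domain : Set 𝓗') = ⇑e '' (T.domain : Set 𝓗) ∧
      (∀ (x : T.domain) (h : e (x : 𝓗) ∈ T'.domain), T' ⟨e (x : 𝓗), h⟩ = e (T x)) ∧
      Dense (T'.domain : Set 𝓗') ∧
      T'.adjoint = T' := by
  classical
  set eL : 𝓗 ≃ₗ[ℂ] 𝓗' := e.toLinearEquiv with heL
  have hcoe : ⇑eL = ⇑e := rfl
  set em := eL.submoduleMap T.domain with hem
  set T' : 𝓗' →ₗ.[ℂ] 𝓗' :=
    ⟨T.domain.map (eL : 𝓗 →ₗ[ℂ] 𝓗'),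
      (eL : 𝓗 →ₗ[ℂ] 𝓗').comp (T.toFun.comp (em.symm : _ →ₗ[ℂ] T.domain))⟩ with hT'
  have hdom : (T'.domain : Set 𝓗') = ⇑e '' (T.domain : Set 𝓗) := by
    simp [hT', Submodule.map_coe, hcoe]
  -- action of T'
  have happ : ∀ (x : T.domain) (h : e (x : 𝓗) ∈ T'.domain), T' ⟨e (x : 𝓗), h⟩ = e (T x) := by
    intro x h
    have hsymm : em.symm ⟨e (x : 𝓗), h⟩ = x := by
      rw [LinearEquiv.symm_apply_eq]
      exact Subtype.ext (LinearEquiv.submoduleMap_apply eL T.domain x).symm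
    show eL ((T.toFun) (em.symm ⟨e (x : 𝓗), h⟩)) = e (T x)
    rw [hsymm]; rfl
  -- every element of T'.domain is of the form e x
  have hform : ∀ y : T'.domain, ∃ x : T.domain,
      (y : 𝓗') = e (x : 𝓗) := by
    rintro ⟨y, hy⟩
    rcases hy with ⟨x, hx, rfl⟩
    exact ⟨⟨x, hx⟩, rfl⟩
  have hdense' : Dense (T'.domain : Set 𝓗') := by
    rw [hdom]
    exact e.toHomeomorph.isDenseEmbedding.dense_image.2 hdense
  -- symmetry of T
  have hdomT : T.adjoint.domain = T.domain := congrArg LinearPMap.domain hsa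
  have hFA := LinearPMap.adjoint_isFormalAdjoint hdense
  have hsymm : ∀ x y : T.domain,
      (inner ℂ (T x) (y : 𝓗) : ℂ) = inner ℂ (x : 𝓗) (T y) := by
    intro x y
    have hx' : (x : 𝓗) ∈ T.adjoint.domain := by rw [hdomT]; exact x.2
    have h1 := hFA ⟨(x : 𝓗), hx'⟩ y
    have h2 : T.adjoint ⟨(x : 𝓗), hx'⟩ = T x := by
      rcases LinearPMap.ext_iff.1 hsa with ⟨hd, hfun⟩
      exact hfun (x := (x : 𝓗)) (hf := hx') (hg := x.2)
    rwa [h2] at h1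
  -- T' is symmetric, hence a formal adjoint of itself
  have hFA' : T'.IsFormalAdjoint T' := by
    intro x y
    rcases hform x with ⟨a, ha⟩
    rcases hform y with ⟨b, hb⟩
    have hax : x = ⟨e (a : 𝓗), ha ▸ x.2⟩ := Subtype.ext ha
    have hbx : y = ⟨e (b : 𝓗), hb ▸ y.2⟩ := Subtype.ext hb
    rw [hax, hbx, happ a _, happ b _]
    simp only [LinearIsometryEquiv.inner_map_map]
    exact hsymm a b
  have hle : T' ≤ T'.adjoint := hFA'.le_adjoint hdense'
  -- converse domain inclusion
  have hdomle : (T'.adjoint.domain : Set 𝓗') ⊆ (T'.domain : Set 𝓗') := by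
    intro y hy
    have hy' : (e.symm y : 𝓗) ∈ T.adjoint.domain := by
      apply LinearPMap.mem_adjoint_domain_of_exists
      refine ⟨e.symm (T'.adjoint ⟨y, hy⟩), fun x => ?_⟩
      have h1 : (inner ℂ (e.symm (T'.adjoint ⟨y, hy⟩)) (x : 𝓗) : ℂ)
          = inner ℂ (T'.adjoint ⟨y, hy⟩) (e (x : 𝓗)) := by
        rw [← LinearIsometryEquiv.inner_map_map e]
        simp
      have hmem : e (x : 𝓗) ∈ T'.domain := by
        have : e (x : 𝓗) ∈ (T'.domain : Set 𝓗') := by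
          rw [hdom]; exact Set.mem_image_of_mem _ x.2
        exact this
      have h2 := LinearPMap.adjoint_isFormalAdjoint hdense' ⟨y, hy⟩ ⟨e (x : 𝓗), hmem⟩
      rw [h1, h2, happ x hmem]
      rw [← LinearIsometryEquiv.inner_map_map e (e.symm y) (T x)]
      simp
    rw [hdomT] at hy'
    rw [hdom]
    exact ⟨e.symm y, hy', by simp⟩
  have hdomeq : T'.domain = T'.adjoint.domain :=
    le_antisymm hle.1 hdomle
  exact ⟨T', hdom, happ, hdense',
    (LinearPMap.eq_of_le_of_domain_eq hle hdomeq).symm⟩
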